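/- Let n ≥ 1 and consider the symmetric group S_n with the (strong) Bruhat order ≤. For permutations v ≤ w and a permutation x, the following are equivalent: (1) x ∈ [v,w] (i.e., v ≤ x ≤ w); (2) for every k ∈ {1,…,n-1} there exists y ∈ [v,w] with y({1,…,k}) = x({1,…,k}). -/

import Mathlib

/-- The (strong) Bruhat order on the symmetric group `S_n`, via the standard
dominance criterion: `v ≤ w` iff for all `i, k`,
`#{j ≤ k : v(j) ≥ i} ≤ #{j ≤ k : w(j) ≥ i}`. -/
def bruhatLE {n : ℕ} (v w : Equiv.Perm (Fin n)) : Prop :=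
  ∀ i k : Fin n,
    (Finset.univ.filter fun j => j ≤ k ∧ i ≤ v j).card ≤
    (Finset.univ.filter fun j => j ≤ k ∧ i ≤ w j).card

private lemma aux_count {n : ℕ} (z : Equiv.Perm (Fin n)) (s : Finset (Fin n)) (i : Fin n) :
    (s.filter fun j => i ≤ z j).card = ((s.image z).filter fun m => i ≤ m).card := by
  rw [Finset.filter_image, Finset.card_image_of_injective _ z.injective]

private lemma aux_split {n : ℕ} (z : Equiv.Perm (Fin n)) (i kf : Fin n) :
    (Finset.univ.filter fun j => j ≤ kf ∧ i ≤ z j).card =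
      (((Finset.univ.filter fun j : Fin n => (j : ℕ) < kf.val + 1).image z).filter
        fun m => i ≤ m).card := by
  rw [← aux_count]
  congr 1
  rw [Finset.filter_filter]
  apply Finset.filter_congr
  intro j _
  rw [Fin.le_def, Nat.lt_succ_iff]

/-- For `v ≤ w` in Bruhat order on `S_n` and any permutation `x`:
`x ∈ [v,w]` iff for every `k ∈ {1,…,n-1}` there is `y ∈ [v,w]` with
`y({1,…,k}) = x({1,…,k})`. -/
theorem stmt11 (n : ℕ) (hn : 1 ≤ n) (v w x : Equiv.Perm (Fin n)) (hvw : bruhatLE v w) :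
    (bruhatLE v x ∧ bruhatLE x w) ↔
      ∀ k : ℕ, 1 ≤ k → k ≤ n - 1 →
        ∃ y : Equiv.Perm (Fin n), bruhatLE v y ∧ bruhatLE y w ∧
          (Finset.univ.filter fun j : Fin n => (j : ℕ) < k).image y =
          (Finset.univ.filter fun j : Fin n => (j : ℕ) < k).image x := by
  constructor
  · rintro ⟨h1, h2⟩ k _ _
    exact ⟨x, h1, h2, rfl⟩
  · intro h
    have main : ∀ (i kf : Fin n),
        (Finset.univ.filter fun j => j ≤ kf ∧ i ≤ v j).card ≤
          (Finset.univ.filter fun j => j ≤ kf ∧ i ≤ x j).card ∧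
        (Finset.univ.filter fun j => j ≤ kf ∧ i ≤ x j).card ≤
          (Finset.univ.filter fun j => j ≤ kf ∧ i ≤ w j).card := by
      intro i kf
      by_cases hk : kf.val + 1 ≤ n - 1
      · obtain ⟨y, hvy, hyw, himg⟩ := h (kf.val + 1) (by omega) hk
        have hx : (Finset.univ.filter fun j => j ≤ kf ∧ i ≤ x j).card =
            (Finset.univ.filter fun j => j ≤ kf ∧ i ≤ y j).card := by
          rw [aux_split x i kf, aux_split y i kf, himg]
        rw [hx]
        exact ⟨hvy i kf, hyw i kf⟩
      · -- kf is the last index; the counts are the same for every permutation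
        have hall : ∀ j : Fin n, j ≤ kf := by
          intro j
          have h1 := j.isLt
          have h2 := kf.isLt
          simp only [Fin.le_def]
          omega
        have huniv : ∀ z : Equiv.Perm (Fin n),
            (Finset.univ : Finset (Fin n)).image z = Finset.univ := by
          intro z
          apply Finset.eq_univ_of_forall
          intro m
          exact Finset.mem_image.mpr ⟨z⁻¹ m, Finset.mem_univ _, z.apply_symm_apply m⟩
        have eqz : ∀ z : Equiv.Perm (Fin n),
            (Finset.univ.filter fun j => j ≤ kf ∧ i ≤ z j).card =
              (Finset.univ.filter fun m : Fin n => i ≤ m).card := by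
          intro z
          have h1 : (Finset.univ.filter fun j => j ≤ kf ∧ i ≤ z j) =
              Finset.univ.filter fun j => i ≤ z j := by
            apply Finset.filter_congr
            intro j _
            simp [hall j]
          rw [h1, aux_count, huniv]
        rw [eqz v, eqz x, eqz w]
        exact ⟨le_refl _, le_refl _⟩
    exact ⟨fun i kf => (main i kf).1, fun i kf => (main i kf).2⟩
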